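/- Let d ≥ 1 be an integer that is not a perfect cube and let z ≥ 1 be an integer. Then lim_{n→∞} μ_n(3,0,d,z)/μ_n(3,2,d,z) = d^{2/3} (the real cube root of d²) and lim_{n→∞} μ_n(3,1,d,z)/μ_n(3,2,d,z) = d^{1/3} (the real cube root of d). -/

import Mathlib

open Filter Topology

/-- The generalized Rédei polynomials
`μ_n(e,k,d,z) = Σ_{h=0}^{n} C(n, e·h − k) · d^{(e−1)h − k} · z^{n − e·h + k}`,
where the binomial coefficient is `0` when `e·h − k < 0` or `e·h − k > n`. -/
def mu (e k : ℕ) (d z : ℤ) (n : ℕ) : ℤ :=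
  ∑ h ∈ Finset.range (n + 1),
    if k ≤ e * h then
      (n.choose (e * h - k) : ℤ) * d ^ ((e - 1) * h - k) * z ^ (n + k - e * h)
    else 0

namespace MuAux

def A (d z : ℤ) (n : ℕ) : ℤ :=
  ∑ h ∈ Finset.range (n + 1), (n.choose (3*h) : ℤ) * d ^ (2*h) * z ^ (n - 3*h)

def B (d z : ℤ) (n : ℕ) : ℤ :=
  ∑ h ∈ Finset.range (n + 1), (n.choose (3*h+1) : ℤ) * d ^ (2*h) * z ^ (n - (3*h+1))

def C (d z : ℤ) (n : ℕ) : ℤ :=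
  ∑ h ∈ Finset.range (n + 1), (n.choose (3*h+2) : ℤ) * d ^ (2*h) * z ^ (n - (3*h+2))

lemma mu0_eq (d z : ℤ) (n : ℕ) : mu 3 0 d z n = A d z n := by
  unfold mu A
  refine Finset.sum_congr rfl fun h _ => ?_
  simp

lemma mu2_eq (d z : ℤ) (n : ℕ) : mu 3 2 d z n = B d z n := by
  unfold mu B
  rw [Finset.sum_range_succ' (fun h => if 2 ≤ 3*h then (n.choose (3*h-2) : ℤ) * d ^ ((3-1)*h - 2) * z ^ (n + 2 - 3*h) else 0) n]
  rw [Finset.sum_range_succ (fun h => (n.choose (3*h+1) : ℤ) * d ^ (2*h) * z ^ (n - (3*h+1))) n]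
  have h0 : (if 2 ≤ 3*0 then (n.choose (3*0-2) : ℤ) * d ^ ((3-1)*0 - 2) * z ^ (n + 2 - 3*0) else 0) = 0 := by norm_num
  have hlast : (n.choose (3*n+1) : ℤ) * d ^ (2*n) * z ^ (n - (3*n+1)) = 0 := by
    rw [Nat.choose_eq_zero_of_lt (by omega)]; push_cast; ring
  rw [h0, hlast, add_zero, add_zero]
  refine Finset.sum_congr rfl fun h _ => ?_
  have h2 : 2 ≤ 3*(h+1) := by omega
  rw [if_pos h2]
  have e1 : 3*(h+1) - 2 = 3*h+1 := by omega
  have e2 : (3-1)*(h+1) - 2 = 2*h := by omega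
  have e3 : n + 2 - 3*(h+1) = n - (3*h+1) := by omega
  rw [e1, e2, e3]

lemma mu1_eq (d z : ℤ) (n : ℕ) : mu 3 1 d z n = d * C d z n := by
  unfold mu C
  rw [Finset.sum_range_succ' (fun h => if 1 ≤ 3*h then (n.choose (3*h-1) : ℤ) * d ^ ((3-1)*h - 1) * z ^ (n + 1 - 3*h) else 0) n]
  rw [Finset.mul_sum, Finset.sum_range_succ (fun h => d * ((n.choose (3*h+2) : ℤ) * d ^ (2*h) * z ^ (n - (3*h+2)))) n]
  have h0 : (if 1 ≤ 3*0 then (n.choose (3*0-1) : ℤ) * d ^ ((3-1)*0 - 1) * z ^ (n + 1 - 3*0) else 0) = 0 := by norm_num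
  have hlast : d * ((n.choose (3*n+2) : ℤ) * d ^ (2*n) * z ^ (n - (3*n+2))) = 0 := by
    rw [Nat.choose_eq_zero_of_lt (by omega)]; push_cast; ring
  rw [h0, hlast, add_zero, add_zero]
  refine Finset.sum_congr rfl fun h _ => ?_
  have h2 : 1 ≤ 3*(h+1) := by omega
  rw [if_pos h2]
  have e1 : 3*(h+1) - 1 = 3*h+2 := by omega
  have e2 : (3-1)*(h+1) - 1 = 2*h+1 := by omega
  have e3 : n + 1 - 3*(h+1) = n - (3*h+2) := by omega
  rw [e1, e2, e3, pow_succ]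
  ring

lemma B_rec (d z : ℤ) (n : ℕ) : B d z (n+1) = z * B d z n + A d z n := by
  have h1 : ∀ h : ℕ, (((n+1).choose (3*h+1) : ℤ) * d^(2*h) * z^((n+1) - (3*h+1)))
      = z * ((n.choose (3*h+1) : ℤ) * d^(2*h) * z^(n-(3*h+1)))
        + (n.choose (3*h) : ℤ) * d^(2*h) * z^(n - 3*h) := by
    intro h
    rw [Nat.choose_succ_succ]
    have e1 : (n+1) - (3*h+1) = n - 3*h := by omega
    rw [e1]
    push_cast
    rcases le_or_gt (3*h+1) n with hle | hlt
    · have e2 : n - 3*h = (n - (3*h+1)) + 1 := by omega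
      rw [e2, pow_succ]; ring
    · rw [Nat.choose_eq_zero_of_lt hlt]; push_cast; ring
  unfold B A
  rw [Finset.sum_congr rfl (fun h _ => h1 h), Finset.sum_add_distrib, ← Finset.mul_sum]
  rw [Finset.sum_range_succ (fun h => (n.choose (3*h+1) : ℤ) * d^(2*h) * z^(n-(3*h+1))) (n+1)]
  rw [Finset.sum_range_succ (fun h => (n.choose (3*h) : ℤ) * d^(2*h) * z^(n - 3*h)) (n+1)]
  rw [Nat.choose_eq_zero_of_lt (show n < 3*(n+1)+1 by omega)]
  rw [Nat.choose_eq_zero_of_lt (show n < 3*(n+1) by omega)]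
  push_cast; ring

lemma C_rec (d z : ℤ) (n : ℕ) : C d z (n+1) = z * C d z n + B d z n := by
  have h1 : ∀ h : ℕ, (((n+1).choose (3*h+2) : ℤ) * d^(2*h) * z^((n+1) - (3*h+2)))
      = z * ((n.choose (3*h+2) : ℤ) * d^(2*h) * z^(n-(3*h+2)))
        + (n.choose (3*h+1) : ℤ) * d^(2*h) * z^(n - (3*h+1)) := by
    intro h
    rw [Nat.choose_succ_succ]
    have e1 : (n+1) - (3*h+2) = n - (3*h+1) := by omega
    rw [e1]
    push_cast
    rcases le_or_gt (3*h+2) n with hle | hlt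
    · have e2 : n - (3*h+1) = (n - (3*h+2)) + 1 := by omega
      rw [e2, pow_succ]; ring
    · rw [Nat.choose_eq_zero_of_lt hlt]; push_cast; ring
  unfold C B
  rw [Finset.sum_congr rfl (fun h _ => h1 h), Finset.sum_add_distrib, ← Finset.mul_sum]
  rw [Finset.sum_range_succ (fun h => (n.choose (3*h+2) : ℤ) * d^(2*h) * z^(n-(3*h+2))) (n+1)]
  rw [Finset.sum_range_succ (fun h => (n.choose (3*h+1) : ℤ) * d^(2*h) * z^(n - (3*h+1))) (n+1)]
  rw [Nat.choose_eq_zero_of_lt (show n < 3*(n+1)+2 by omega)]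
  rw [Nat.choose_eq_zero_of_lt (show n < 3*(n+1)+1 by omega)]
  push_cast; ring

lemma A_rec (d z : ℤ) (n : ℕ) : A d z (n+1) = z * A d z n + d^2 * C d z n := by
  have h1 : ∀ h : ℕ, (((n+1).choose (3*(h+1)) : ℤ) * d^(2*(h+1)) * z^((n+1) - 3*(h+1)))
      = d^2 * ((n.choose (3*h+2) : ℤ) * d^(2*h) * z^(n-(3*h+2)))
        + z * ((n.choose (3*(h+1)) : ℤ) * d^(2*(h+1)) * z^(n - 3*(h+1))) := by
    intro h
    have e0 : 3*(h+1) = (3*h+2)+1 := by omega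
    rw [e0, Nat.choose_succ_succ]
    have e1 : (n+1) - ((3*h+2)+1) = n - (3*h+2) := by omega
    have e3 : 3*h+2+1 = 3*h+3 := by omega
    have e2 : 2*(h+1) = 2*h+2 := by omega
    rw [e1, e3, e2]
    rcases le_or_gt (3*h+3) n with hle | hlt
    · have e4 : n - (3*h+2) = (n - (3*h+3)) + 1 := by omega
      push_cast
      rw [e4, pow_succ]
      ring
    · rw [Nat.choose_eq_zero_of_lt (show n < 3*h+3 by omega)]
      push_cast; ring
  unfold A C
  rw [Finset.sum_range_succ' (fun h => ((n+1).choose (3*h) : ℤ) * d^(2*h) * z^((n+1) - 3*h)) (n+1)]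
  rw [Finset.sum_congr rfl (fun h _ => h1 h), Finset.sum_add_distrib, ← Finset.mul_sum, ← Finset.mul_sum]
  rw [Finset.sum_range_succ (fun h => ((n.choose (3*(h+1)) : ℤ) * d^(2*(h+1)) * z^(n - 3*(h+1)))) n]
  rw [Finset.sum_range_succ' (fun h => ((n.choose (3*h) : ℤ) * d^(2*h) * z^(n - 3*h))) n]
  rw [Nat.choose_eq_zero_of_lt (show n < 3*(n+1) by omega)]
  have ezn : (n+1) - 3*0 = n+1 := by omega
  rw [ezn]
  push_cast
  have : n - 3*0 = n := by omega
  rw [this]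
  simp only [Nat.choose_zero_right]
  rw [pow_succ]
  push_cast
  ring

lemma key (d z : ℤ) (y : ℂ) (hy : y^3 = (d:ℂ)^2) (n : ℕ) :
    ((z:ℂ) + y)^n = (A d z n : ℂ) + (B d z n : ℂ) * y + (C d z n : ℂ) * y^2 := by
  induction n with
  | zero => simp [A, B, C]
  | succ n ih =>
      rw [pow_succ, ih, A_rec, B_rec, C_rec]
      push_cast
      linear_combination (C d z n : ℂ) * hy

noncomputable def ω : ℂ := -1/2 + (Real.sqrt 3 / 2) * Complex.I

lemma hs3 : ((Real.sqrt 3 : ℝ) : ℂ)^2 = 3 := by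
  norm_cast
  rw [Real.sq_sqrt]; norm_num

lemma omega_sum : 1 + ω + ω^2 = 0 := by
  unfold ω
  linear_combination (Complex.I^2/4) * hs3 + (3/4:ℂ) * Complex.I_sq

lemma omega_cube : ω^3 = 1 := by
  linear_combination (ω - 1) * omega_sum

lemma omega_re : ω.re = -1/2 := by simp [ω]

lemma omega_normSq : Complex.normSq ω = 1 := by
  have h : Real.sqrt 3 ^ 2 = 3 := Real.sq_sqrt (by norm_num)
  simp [Complex.normSq_apply, ω]
  nlinarith [h]

lemma omega_sq_re : (ω^2).re = -1/2 := by
  have h : ω^2 = -1 - ω := by linear_combination omega_sum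
  rw [h]
  simp [omega_re]
  norm_num

lemma omega_sq_normSq : Complex.normSq (ω^2) = 1 := by
  rw [map_pow, omega_normSq]; norm_num

lemma norm_lt (zr b : ℝ) (hz : 0 < zr) (hb : 0 < b) (u : ℂ)
    (hre : u.re = -1/2) (hns : Complex.normSq u = 1) :
    ‖(zr:ℂ) + u * b‖ < zr + b := by
  have hns' : u.re^2 + u.im^2 = 1 := by
    rw [← hns]; simp [Complex.normSq_apply]; ring
  rw [Complex.norm_def]
  rw [Real.sqrt_lt' (by positivity)]
  have hre2 : ((zr:ℂ) + u * b).re = zr + u.re * b := by simp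
  have him2 : ((zr:ℂ) + u * b).im = u.im * b := by simp
  rw [Complex.normSq_apply, hre2, him2, hre]
  have him : u.im^2 = 3/4 := by
    rw [hre] at hns'; nlinarith [hns']
  have h2 : (u.im*b)^2 = 3/4 * b^2 := by rw [mul_pow, him]
  nlinarith [h2, mul_pos hz hb]

end MuAux

open MuAux

/-- If `d ≥ 1` is not a perfect cube and `z ≥ 1`, then
`μ_n(3,0,d,z)/μ_n(3,2,d,z) → d^{2/3}` and `μ_n(3,1,d,z)/μ_n(3,2,d,z) → d^{1/3}`. -/
theorem mu_ratio_tendsto_cbrt (d : ℤ) (hd : 1 ≤ d) (hdcube : ¬ ∃ m : ℤ, m ^ 3 = d)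
    (z : ℤ) (hz : 1 ≤ z) :
    Tendsto (fun n : ℕ => (mu 3 0 d z n : ℝ) / (mu 3 2 d z n : ℝ))
        atTop (𝓝 ((d : ℝ) ^ ((2 : ℝ) / 3))) ∧
    Tendsto (fun n : ℕ => (mu 3 1 d z n : ℝ) / (mu 3 2 d z n : ℝ))
        atTop (𝓝 ((d : ℝ) ^ ((1 : ℝ) / 3))) := by
  have hd0 : (0:ℝ) < (d:ℝ) := by exact_mod_cast lt_of_lt_of_le one_pos hd
  have hz0 : (0:ℝ) < (z:ℝ) := by exact_mod_cast lt_of_lt_of_le one_pos hz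
  set b : ℝ := (d:ℝ) ^ ((2:ℝ)/3) with hbdef
  have hb0 : 0 < b := Real.rpow_pos_of_pos hd0 _
  have hb3 : b ^ (3:ℕ) = (d:ℝ)^(2:ℕ) := by
    rw [hbdef, ← Real.rpow_natCast ((d:ℝ) ^ ((2:ℝ)/3)) 3, ← Real.rpow_mul hd0.le,
      ← Real.rpow_natCast (d:ℝ) 2]
    norm_num
  have hbC : ((b:ℂ))^3 = ((d:ℤ):ℂ)^2 := by
    have := congrArg (fun x : ℝ => (x : ℂ)) hb3
    push_cast at this
    exact_mod_cast this
  have hy1 : (ω * b)^3 = ((d:ℤ):ℂ)^2 := by rw [mul_pow, omega_cube, one_mul, hbC]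
  have hy2 : (ω^2 * b)^3 = ((d:ℤ):ℂ)^2 := by
    rw [mul_pow, ← pow_mul, show 2*3 = 3*2 from rfl, pow_mul, omega_cube, one_pow, one_mul, hbC]
  have hzb : (0:ℝ) < (z:ℝ) + b := by linarith
  have hzbC : ((z:ℂ) + (b:ℂ)) ≠ 0 := by
    have h1 : ((z:ℂ) + (b:ℂ)) = ((((z:ℝ) + b : ℝ)):ℂ) := by push_cast; ring
    rw [h1]
    exact_mod_cast ne_of_gt hzb
  have hnorm0 : ‖(z:ℂ) + (b:ℂ)‖ = (z:ℝ) + b := by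
    have h1 : ((z:ℂ) + (b:ℂ)) = ((((z:ℝ) + b : ℝ)):ℂ) := by push_cast; ring
    rw [h1, Complex.norm_real]
    exact abs_of_pos hzb
  -- the two contraction ratios
  set q1 : ℂ := ((z:ℂ) + ω * b) / ((z:ℂ) + b) with hq1def
  set q2 : ℂ := ((z:ℂ) + ω^2 * b) / ((z:ℂ) + b) with hq2def
  have hq1 : ‖q1‖ < 1 := by
    rw [hq1def, norm_div, hnorm0, div_lt_one hzb]
    exact norm_lt _ _ hz0 hb0 ω omega_re omega_normSq
  have hq2 : ‖q2‖ < 1 := by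
    rw [hq2def, norm_div, hnorm0, div_lt_one hzb]
    exact norm_lt _ _ hz0 hb0 (ω^2) omega_sq_re omega_sq_normSq
  have t1 : Tendsto (fun n : ℕ => q1 ^ n) atTop (𝓝 0) :=
    tendsto_pow_atTop_nhds_zero_of_norm_lt_one hq1
  have t2 : Tendsto (fun n : ℕ => q2 ^ n) atTop (𝓝 0) :=
    tendsto_pow_atTop_nhds_zero_of_norm_lt_one hq2
  have e0 := key d z (b:ℂ) hbC
  have e1 := key d z (ω * b) hy1
  have e2 := key d z (ω^2 * b) hy2
  -- the three linear combinations
  have hsumA : ∀ n : ℕ, 3 * (A d z n : ℂ)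
      = ((z:ℂ) + b)^n + ((z:ℂ) + ω*b)^n + ((z:ℂ) + ω^2*b)^n := by
    intro n
    rw [e0 n, e1 n, e2 n]
    linear_combination (-(B d z n : ℂ)*b - (C d z n : ℂ)*b^2) * omega_sum
      + (-(C d z n : ℂ)*b^2*ω) * omega_cube
  have hsumB : ∀ n : ℕ, 3 * (B d z n : ℂ) * b
      = ((z:ℂ) + b)^n + ω^2 * ((z:ℂ) + ω*b)^n + ω * ((z:ℂ) + ω^2*b)^n := by
    intro n
    rw [e0 n, e1 n, e2 n]
    linear_combination (-(A d z n : ℂ) - (C d z n : ℂ)*b^2) * omega_sum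
      + (-2*(B d z n : ℂ)*b - (C d z n : ℂ)*b^2*(ω + ω^2)) * omega_cube
  have hsumC : ∀ n : ℕ, 3 * (C d z n : ℂ) * b^2
      = ((z:ℂ) + b)^n + ω * ((z:ℂ) + ω*b)^n + ω^2 * ((z:ℂ) + ω^2*b)^n := by
    intro n
    rw [e0 n, e1 n, e2 n]
    linear_combination (-(A d z n : ℂ) - (B d z n : ℂ)*b) * omega_sum
      + (-(B d z n : ℂ)*b*ω - (C d z n : ℂ)*b^2*(ω^3 + 2)) * omega_cube
  have hS0ne : ∀ n : ℕ, ((z:ℂ) + b)^n ≠ 0 := fun n => pow_ne_zero n hzbC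
  have hbne : ((b:ℝ):ℂ) ≠ 0 := by exact_mod_cast ne_of_gt hb0
  have hq1S : ∀ n : ℕ, q1^n * ((z:ℂ) + b)^n = ((z:ℂ) + ω*b)^n := by
    intro n
    rw [hq1def, div_pow, div_mul_cancel₀ _ (hS0ne n)]
  have hq2S : ∀ n : ℕ, q2^n * ((z:ℂ) + b)^n = ((z:ℂ) + ω^2*b)^n := by
    intro n
    rw [hq2def, div_pow, div_mul_cancel₀ _ (hS0ne n)]
  -- divide
  have hA : ∀ n : ℕ, (A d z n : ℂ) / ((z:ℂ) + b)^n = (1 + q1^n + q2^n) / 3 := by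
    intro n
    rw [div_eq_div_iff (hS0ne n) (by norm_num : (3:ℂ) ≠ 0)]
    linear_combination hsumA n - hq1S n - hq2S n
  have hB : ∀ n : ℕ, (B d z n : ℂ) / ((z:ℂ) + b)^n = (1 + ω^2 * q1^n + ω * q2^n) / (3*b) := by
    intro n
    rw [div_eq_div_iff (hS0ne n) (by simp [hbne] : (3*(b:ℂ)) ≠ 0)]
    linear_combination hsumB n - ω^2 * hq1S n - ω * hq2S n
  have hC : ∀ n : ℕ, (C d z n : ℂ) / ((z:ℂ) + b)^n = (1 + ω * q1^n + ω^2 * q2^n) / (3*b^2) := by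
    intro n
    rw [div_eq_div_iff (hS0ne n) (by simp [hbne] : (3*(b:ℂ)^2) ≠ 0)]
    linear_combination hsumC n - ω * hq1S n - ω^2 * hq2S n
  -- limits of normalized sequences
  have LA : Tendsto (fun n : ℕ => (A d z n : ℂ) / ((z:ℂ) + b)^n) atTop (𝓝 (1/3)) := by
    simp only [hA]
    have : Tendsto (fun n : ℕ => (1 + q1^n + q2^n)/3) atTop (𝓝 ((1 + 0 + 0)/3)) :=
      ((tendsto_const_nhds.add t1).add t2).div_const 3
    simpa using this
  have LB : Tendsto (fun n : ℕ => (B d z n : ℂ) / ((z:ℂ) + b)^n) atTop (𝓝 (1/(3*b))) := by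
    simp only [hB]
    have : Tendsto (fun n : ℕ => (1 + ω^2 * q1^n + ω * q2^n)/(3*(b:ℂ))) atTop
        (𝓝 ((1 + ω^2 * 0 + ω * 0)/(3*(b:ℂ)))) :=
      ((tendsto_const_nhds.add (t1.const_mul _)).add (t2.const_mul _)).div_const _
    simpa using this
  have LC : Tendsto (fun n : ℕ => (C d z n : ℂ) / ((z:ℂ) + b)^n) atTop (𝓝 (1/(3*b^2))) := by
    simp only [hC]
    have : Tendsto (fun n : ℕ => (1 + ω * q1^n + ω^2 * q2^n)/(3*(b:ℂ)^2)) atTop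
        (𝓝 ((1 + ω * 0 + ω^2 * 0)/(3*(b:ℂ)^2))) :=
      ((tendsto_const_nhds.add (t1.const_mul _)).add (t2.const_mul _)).div_const _
    simpa using this
  have h3bne : (1:ℂ)/(3*b) ≠ 0 := by
    simp [hbne]
  -- ratio limits in ℂ
  have ratio_eq : ∀ (X : ℕ → ℤ) (n : ℕ), (X n : ℂ) / (B d z n : ℂ)
      = ((X n : ℂ) / ((z:ℂ) + b)^n) / ((B d z n : ℂ) / ((z:ℂ) + b)^n) := by
    intro X n
    by_cases hB0 : (B d z n : ℂ) = 0
    · simp [hB0]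
    · field_simp
  have R1 : Tendsto (fun n : ℕ => (A d z n : ℂ) / (B d z n : ℂ)) atTop (𝓝 ((b:ℝ):ℂ)) := by
    have hlim : Tendsto (fun n : ℕ => ((A d z n : ℂ) / ((z:ℂ) + b)^n) / ((B d z n : ℂ) / ((z:ℂ) + b)^n))
        atTop (𝓝 ((1/3) / (1/(3*(b:ℂ))))) := LA.div LB h3bne
    have hval : (1/3 : ℂ) / (1/(3*(b:ℂ))) = ((b:ℝ):ℂ) := by
      field_simp
    rw [← hval]
    exact hlim.congr fun n => (ratio_eq (fun m => A d z m) n).symm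
  have R2 : Tendsto (fun n : ℕ => ((d:ℂ) * (C d z n : ℂ)) / (B d z n : ℂ))
      atTop (𝓝 ((((d:ℝ)/b : ℝ)):ℂ)) := by
    have hdiv : Tendsto (fun n : ℕ => ((C d z n : ℂ) / ((z:ℂ) + b)^n) / ((B d z n : ℂ) / ((z:ℂ) + b)^n))
        atTop (𝓝 ((1/(3*(b:ℂ)^2)) / (1/(3*(b:ℂ))))) := LC.div LB h3bne
    have : Tendsto (fun n : ℕ => (d:ℂ) * ((C d z n : ℂ) / (B d z n : ℂ))) atTop
        (𝓝 ((d:ℂ) * ((1/(3*(b:ℂ)^2)) / (1/(3*(b:ℂ)))))) := by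
      apply Tendsto.const_mul
      exact hdiv.congr fun n => (ratio_eq (fun m => C d z m) n).symm
    have hval : (d:ℂ) * ((1/(3*(b:ℂ)^2)) / (1/(3*(b:ℂ)))) = ((((d:ℝ)/b : ℝ)):ℂ) := by
      push_cast
      field_simp
    rw [← hval]
    simpa only [mul_div_assoc] using this
  -- back to ℝ
  constructor
  · have hre : ∀ n : ℕ, ((A d z n : ℂ) / (B d z n : ℂ)).re
        = (mu 3 0 d z n : ℝ) / (mu 3 2 d z n : ℝ) := by
      intro n
      rw [mu0_eq, mu2_eq]
      have : (A d z n : ℂ) / (B d z n : ℂ) = ((((A d z n : ℝ) / (B d z n : ℝ)) : ℝ) : ℂ) := by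
        push_cast; ring
      rw [this, Complex.ofReal_re]
    have := (Complex.continuous_re.tendsto _).comp R1
    simp only [Function.comp_def, hre, Complex.ofReal_re] at this
    exact this
  · have hre : ∀ n : ℕ, (((d:ℂ) * (C d z n : ℂ)) / (B d z n : ℂ)).re
        = (mu 3 1 d z n : ℝ) / (mu 3 2 d z n : ℝ) := by
      intro n
      rw [mu1_eq, mu2_eq]
      have : ((d:ℂ) * (C d z n : ℂ)) / (B d z n : ℂ)
          = (((((d:ℝ) * (C d z n : ℝ)) / (B d z n : ℝ)) : ℝ) : ℂ) := by
        push_cast; ring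
      rw [this, Complex.ofReal_re]
      push_cast; ring_nf
    have hfin := (Complex.continuous_re.tendsto _).comp R2
    simp only [Function.comp_def, hre, Complex.ofReal_re] at hfin
    have hval : (d:ℝ)/b = (d:ℝ) ^ ((1:ℝ)/3) := by
      rw [hbdef, div_eq_iff (ne_of_gt hb0), ← Real.rpow_add hd0]
      norm_num
    rwa [hval] at hfin
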